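/- Let (X,d) be a proper geodesic metric space with a line and associated Busemann function b = b⁺ = -b⁻ (assuming b⁺+b⁻ ≡ 0). Then for every a ∈ ℝ the function a·b is c-concave for the cost c(x,y) = d²(x,y)/2, and its c-transform satisfies (a·b)^c = -a·b - a²/2. -/
import Mathlib

open Filter Set

private lemma bus_lip {X : Type*} [MetricSpace X] (γ : ℝ → X) (b : X → ℝ)
    (hb : ∀ x, Tendsto (fun t : ℝ => t - dist x (γ t)) atTop (nhds (b x)))
    (x y : X) : b x - b y ≤ dist x y := by
  have h : Tendsto (fun t : ℝ => (t - dist x (γ t)) - (t - dist y (γ t))) atTop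
      (nhds (b x - b y)) := (hb x).sub (hb y)
  refine le_of_tendsto h (Eventually.of_forall fun t => ?_)
  have h1 := abs_dist_sub_le y x (γ t)
  have h2 := abs_le.1 h1
  have := dist_comm y x
  simp only [this] at h2
  linarith [h2.2]

private lemma bus_ge {X : Type*} [MetricSpace X] (γ : ℝ → X)
    (hline : ∀ t s : ℝ, dist (γ t) (γ s) = |t - s|) (b : X → ℝ)
    (hb : ∀ x, Tendsto (fun t : ℝ => t - dist x (γ t)) atTop (nhds (b x)))
    (x : X) (t : ℝ) : t - dist x (γ t) ≤ b x := by
  refine ge_of_tendsto (hb x) ?_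
  filter_upwards [eventually_ge_atTop t] with s hs
  have h := dist_triangle x (γ t) (γ s)
  rw [hline t s, abs_of_nonpos (by linarith)] at h
  linarith

/-- Forward approximation: points with `b` increased by `a` at distance `a`. -/
private lemma bus_approx {X : Type*} [MetricSpace X]
    (hgeo : ∀ x y : X, ∃ g : ℝ → X, g 0 = x ∧ g (dist x y) = y ∧
      ∀ s ∈ Set.Icc (0 : ℝ) (dist x y), ∀ t ∈ Set.Icc (0 : ℝ) (dist x y),
        dist (g s) (g t) = |s - t|)
    (γ : ℝ → X) (hline : ∀ t s : ℝ, dist (γ t) (γ s) = |t - s|) (b : X → ℝ)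
    (hb : ∀ x, Tendsto (fun t : ℝ => t - dist x (γ t)) atTop (nhds (b x)))
    (x : X) (a ε : ℝ) (ha : 0 ≤ a) (hε : 0 < ε) :
    ∃ y : X, dist x y = a ∧ b x + a - ε ≤ b y := by
  -- choose t with t - dist x (γ t) > b x - ε and dist x (γ t) ≥ a
  have h1 : ∀ᶠ t : ℝ in atTop, b x - ε < t - dist x (γ t) := by
    have := (hb x).eventually (eventually_gt_nhds (show b x - ε < b x by linarith))
    exact this
  have h2 : ∀ᶠ t : ℝ in atTop, a ≤ dist x (γ t) := by
    filter_upwards [eventually_ge_atTop (a + dist x (γ 0)), eventually_ge_atTop (0:ℝ)]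
      with t ht ht0
    have h := dist_triangle (γ 0) x (γ t)
    rw [hline 0 t, abs_of_nonpos (by linarith), dist_comm (γ 0) x] at h
    linarith
  obtain ⟨t, ht1, ht2⟩ := (h1.and h2).exists
  obtain ⟨g, hg0, hgd, hgdist⟩ := hgeo x (γ t)
  set d := dist x (γ t) with hd
  have hd0 : 0 ≤ d := dist_nonneg
  have haIcc : a ∈ Set.Icc (0:ℝ) d := ⟨ha, ht2⟩
  refine ⟨g a, ?_, ?_⟩
  · have := hgdist 0 ⟨le_refl _, hd0⟩ a haIcc
    rw [hg0] at this
    rw [this, abs_of_nonpos (by linarith), neg_sub, sub_zero]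
  · have hya : dist (g a) (γ t) = d - a := by
      have := hgdist a haIcc d ⟨hd0, le_refl _⟩
      rw [hgd] at this
      rw [this, abs_of_nonpos (by linarith)]
      ring
    have := bus_ge γ hline b hb (g a) t
    rw [hya] at this
    linarith

theorem stmt_3 {X : Type*} [MetricSpace X] [ProperSpace X]
    (hgeo : ∀ x y : X, ∃ g : ℝ → X, g 0 = x ∧ g (dist x y) = y ∧
      ∀ s ∈ Set.Icc (0 : ℝ) (dist x y), ∀ t ∈ Set.Icc (0 : ℝ) (dist x y),
        dist (g s) (g t) = |s - t|)
    (γ : ℝ → X) (hline : ∀ t s : ℝ, dist (γ t) (γ s) = |t - s|)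
    (bp bm : X → ℝ)
    (hbp : ∀ x, Filter.Tendsto (fun t : ℝ => t - dist x (γ t)) Filter.atTop (nhds (bp x)))
    (hbm : ∀ x, Filter.Tendsto (fun t : ℝ => t - dist x (γ (-t))) Filter.atTop (nhds (bm x)))
    (hsum : ∀ x, bp x + bm x = 0)
    (a : ℝ) :
    (∃ ψ : X → ℝ, ∀ x : X,
      IsGLB (Set.range fun y : X => dist x y ^ 2 / 2 - ψ y) (a * bp x)) ∧
    (∀ y : X,
      IsGLB (Set.range fun x : X => dist x y ^ 2 / 2 - a * bp x) (-(a * bp y) - a ^ 2 / 2)) := by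
  -- the backward line
  have hlinem : ∀ t s : ℝ, dist (γ (-t)) (γ (-s)) = |t - s| := by
    intro t s
    rw [hline]
    rw [show (-t - -s) = -(t - s) by ring, abs_neg]
  -- Lipschitz bounds
  have lip : ∀ x y : X, bp x - bp y ≤ dist x y := bus_lip γ bp hbp
  -- key lemma L1
  have L1 : ∀ (c : ℝ) (z : X) (ε : ℝ), 0 < ε →
      ∃ w : X, dist z w = |c| ∧ c * bp z + c ^ 2 - |c| * ε ≤ c * bp w := by
    intro c z ε hε
    rcases le_or_gt 0 c with hc | hc
    · obtain ⟨w, hw1, hw2⟩ := bus_approx hgeo γ hline bp hbp z c ε hc hε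
      refine ⟨w, by rw [hw1, abs_of_nonneg hc], ?_⟩
      rw [abs_of_nonneg hc]
      nlinarith
    · obtain ⟨w, hw1, hw2⟩ := bus_approx hgeo (fun t => γ (-t)) hlinem bm hbm z (-c) ε
        (by linarith) hε
      refine ⟨w, by rw [hw1, abs_of_neg hc], ?_⟩
      rw [abs_of_neg hc]
      have hz := hsum z
      have hww := hsum w
      nlinarith
  constructor
  · -- c-concavity with ψ y = -(a * bp y) - a²/2
    refine ⟨fun y => -(a * bp y) - a ^ 2 / 2, fun x => ?_⟩
    constructor
    · rintro v ⟨y, rfl⟩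
      simp only
      have h1 := lip x y
      have h2 := lip y x
      rw [dist_comm y x] at h2
      have habs : a * (bp x - bp y) ≤ |a| * dist x y := by
        calc a * (bp x - bp y) ≤ |a * (bp x - bp y)| := le_abs_self _
          _ = |a| * |bp x - bp y| := abs_mul _ _
          _ ≤ |a| * dist x y := by
              apply mul_le_mul_of_nonneg_left _ (abs_nonneg a)
              rw [abs_le]; constructor <;> linarith
      have hsq : (dist x y - |a|) ^ 2 ≥ 0 := sq_nonneg _
      have : |a| ^ 2 = a ^ 2 := sq_abs a
      nlinarith
    · intro v hv
      refine le_of_forall_pos_le_add fun ε hε => ?_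
      set ε' := ε / (|a| + 1) with hε'def
      have hε' : 0 < ε' := div_pos hε (by positivity)
      obtain ⟨w, hw1, hw2⟩ := L1 (-a) x ε' hε'
      rw [abs_neg] at hw1 hw2
      have hmem := hv ⟨w, rfl⟩
      simp only at hmem
      rw [hw1] at hmem
      have hsq : |a| ^ 2 = a ^ 2 := sq_abs a
      have hεε : |a| * ε' ≤ ε := by
        rw [hε'def]
        rw [div_eq_inv_mul, ← mul_assoc]
        have h1 : |a| * (|a| + 1)⁻¹ ≤ 1 := by
          rw [mul_inv_le_iff₀ (by positivity)]
          linarith [abs_nonneg a]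
        nlinarith
      nlinarith
  · -- the c-transform
    intro y
    constructor
    · rintro v ⟨x, rfl⟩
      simp only
      have h1 := lip x y
      have h2 := lip y x
      rw [dist_comm y x] at h2
      have habs : a * (bp x - bp y) ≤ |a| * dist x y := by
        calc a * (bp x - bp y) ≤ |a * (bp x - bp y)| := le_abs_self _
          _ = |a| * |bp x - bp y| := abs_mul _ _
          _ ≤ |a| * dist x y := by
              apply mul_le_mul_of_nonneg_left _ (abs_nonneg a)
              rw [abs_le]; constructor <;> linarith
      have hsq : (dist x y - |a|) ^ 2 ≥ 0 := sq_nonneg _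
      have : |a| ^ 2 = a ^ 2 := sq_abs a
      nlinarith
    · intro v hv
      refine le_of_forall_pos_le_add fun ε hε => ?_
      set ε' := ε / (|a| + 1) with hε'def
      have hε' : 0 < ε' := div_pos hε (by positivity)
      obtain ⟨w, hw1, hw2⟩ := L1 a y ε' hε'
      have hmem := hv ⟨w, rfl⟩
      simp only at hmem
      rw [dist_comm w y] at hmem
      rw [hw1] at hmem
      have hsq : |a| ^ 2 = a ^ 2 := sq_abs a
      have hεε : |a| * ε' ≤ ε := by
        rw [hε'def, div_eq_inv_mul, ← mul_assoc]
        have h1 : |a| * (|a| + 1)⁻¹ ≤ 1 := by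
          rw [mul_inv_le_iff₀ (by positivity)]
          linarith [abs_nonneg a]
        nlinarith
      nlinarith
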